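/- arXiv:2402.00326 — 2 statements merged into one kernel-verified Lean document; each statement's English description precedes it below -/
import Mathlib

section
/- Let u_θ be an MLP with scalar input and output in which all hidden layers have the same width d (d₁ = ⋯ = d_L = d), with all biases equal to zero, and suppose the entries of the weight matrices W⁽¹⁾,…,W⁽ᴸ⁺¹⁾ are jointly independent square-integrable real random variables on a probability space, each with mean zero, where every entry of W⁽¹⁾ and of W⁽ᴸ⁺¹⁾ has variance 2/(d+1) and every entry of W⁽ˡ⁾ for 2 ≤ l ≤ L has variance 1/d. Assume σ : ℝ → ℝ is differentiable with measurable derivative satisfying |σ'(t)| ≤ 1 for all t ∈ ℝ. Then for every fixed x ∈ ℝ, the random variable ω ↦ ∂u_θ/∂x (x) is square-integrable and Var(∂u_θ/∂x (x)) ≤ 4/d. -/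
open Matrix MeasureTheory ProbabilityTheory

/-- The pre-activation values `u⁽ˡ⁺¹⁾(x)` of an MLP with scalar input,
dimensions `d`, weights `W`, biases `b` and activation `σ`:
`u⁽¹⁾(x) = W⁽¹⁾ x + b⁽¹⁾` and `u⁽ˡ⁺¹⁾(x) = W⁽ˡ⁺¹⁾ σ(u⁽ˡ⁾(x)) + b⁽ˡ⁺¹⁾`.
Here `mlpPre d W b σ l` is `u⁽ˡ⁺¹⁾`, so `W l` is the weight matrix `W⁽ˡ⁺¹⁾`. -/
noncomputable def mlpPre (d : ℕ → ℕ)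
    (W : (l : ℕ) → Matrix (Fin (d (l + 1))) (Fin (d l)) ℝ)
    (b : (l : ℕ) → Fin (d (l + 1)) → ℝ) (σ : ℝ → ℝ) :
    (l : ℕ) → ℝ → Fin (d (l + 1)) → ℝ
  | 0, x => W 0 *ᵥ (fun _ => x) + b 0
  | l + 1, x => W (l + 1) *ᵥ (fun i => σ (mlpPre d W b σ l x i)) + b (l + 1)

noncomputable def mlpDeriv (d : ℕ → ℕ)
    (W : (l : ℕ) → Matrix (Fin (d (l + 1))) (Fin (d l)) ℝ) (σ : ℝ → ℝ) :
    (l : ℕ) → ℝ → Fin (d (l + 1)) → ℝ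
  | 0, _ => fun i => ∑ j, W 0 i j
  | l + 1, x => fun i => ∑ j, W (l + 1) i j *
      (deriv σ (mlpPre d W (fun _ _ => 0) σ l x j) * mlpDeriv d W σ l x j)

lemma mlpPre_zero (d W b σ) (x : ℝ) : mlpPre d W b σ 0 x = W 0 *ᵥ (fun _ => x) + b 0 := rfl

lemma mlpPre_succ (d W b σ) (l : ℕ) (x : ℝ) :
    mlpPre d W b σ (l+1) x = W (l + 1) *ᵥ (fun i => σ (mlpPre d W b σ l x i)) + b (l + 1) := rfl

lemma mlpDeriv_zero (d W σ) (x : ℝ) (i) : mlpDeriv d W σ 0 x i = ∑ j, W 0 i j := rfl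

lemma mlpDeriv_succ (d W σ) (l : ℕ) (x : ℝ) (i) :
    mlpDeriv d W σ (l+1) x i = ∑ j, W (l + 1) i j *
      (deriv σ (mlpPre d W (fun _ _ => 0) σ l x j) * mlpDeriv d W σ l x j) := rfl

lemma mlpPre_hasDerivAt (d W σ) (hσ : Differentiable ℝ σ) :
    ∀ (l : ℕ) (x : ℝ) (i), HasDerivAt (fun t => mlpPre d W (fun _ _ => 0) σ l t i)
      (mlpDeriv d W σ l x i) x := by
  intro l
  induction l with
  | zero =>
    intro x i
    have h : (fun t => mlpPre d W (fun _ _ => 0) σ 0 t i) = fun t => ∑ j, W 0 i j * t := by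
      funext t
      simp [mlpPre_zero, mulVec, dotProduct]
    rw [h, mlpDeriv_zero]
    have := HasDerivAt.fun_sum (fun j (_ : j ∈ Finset.univ) =>
      ((hasDerivAt_id x).const_mul (W 0 i j)))
    simpa using this
  | succ l ih =>
    intro x i
    have h : (fun t => mlpPre d W (fun _ _ => 0) σ (l+1) t i)
        = fun t => ∑ j, W (l+1) i j * σ (mlpPre d W (fun _ _ => 0) σ l t j) := by
      funext t
      simp [mlpPre_succ, mulVec, dotProduct]
    rw [h, mlpDeriv_succ]
    refine HasDerivAt.fun_sum (fun j _ => ?_)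
    exact (((hσ _).hasDerivAt.comp x (ih x j)).const_mul (W (l+1) i j))

lemma mlpPre_congr (d) (W W') (b σ) : ∀ (l : ℕ), (∀ l', l' ≤ l → W l' = W' l') →
    ∀ x, mlpPre d W b σ l x = mlpPre d W' b σ l x := by
  intro l
  induction l with
  | zero => intro h x; rw [mlpPre_zero, mlpPre_zero, h 0 le_rfl]
  | succ l ih =>
    intro h x
    rw [mlpPre_succ, mlpPre_succ, h (l+1) le_rfl,
      ih (fun l' hl' => h l' (hl'.trans (Nat.le_succ l))) x]

lemma mlpDeriv_congr (d) (W W') (σ) : ∀ (l : ℕ), (∀ l', l' ≤ l → W l' = W' l') →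
    ∀ x, mlpDeriv d W σ l x = mlpDeriv d W' σ l x := by
  intro l
  induction l with
  | zero => intro h x; funext i; rw [mlpDeriv_zero, mlpDeriv_zero, h 0 le_rfl]
  | succ l ih =>
    intro h x
    funext i
    rw [mlpDeriv_succ, mlpDeriv_succ, h (l+1) le_rfl,
      ih (fun l' hl' => h l' (hl'.trans (Nat.le_succ l))) x,
      mlpPre_congr d W W' _ σ l (fun l' hl' => h l' (hl'.trans (Nat.le_succ l))) x]

lemma measurable_mlpPre_param {α : Type*} [MeasurableSpace α] (d : ℕ → ℕ)
    (V : (l : ℕ) → α → Matrix (Fin (d (l + 1))) (Fin (d l)) ℝ)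
    (hV : ∀ l i j, Measurable fun a => V l a i j) {σ : ℝ → ℝ} (hσc : Continuous σ) :
    ∀ (l : ℕ) (x : ℝ) (j), Measurable fun a => mlpPre d (fun l' => V l' a) (fun _ _ => 0) σ l x j := by
  intro l
  induction l with
  | zero =>
    intro x j
    simp only [mlpPre_zero, mulVec, dotProduct, Pi.add_apply]
    exact (Finset.measurable_sum _ (fun k _ => (hV 0 j k).mul_const x)).add measurable_const
  | succ l ih =>
    intro x j
    simp only [mlpPre_succ, mulVec, dotProduct, Pi.add_apply]
    exact (Finset.measurable_sum _ (fun k _ =>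
      (hV (l+1) j k).mul (hσc.measurable.comp (ih x k)))).add measurable_const

lemma measurable_mlpDeriv_param {α : Type*} [MeasurableSpace α] (d : ℕ → ℕ)
    (V : (l : ℕ) → α → Matrix (Fin (d (l + 1))) (Fin (d l)) ℝ)
    (hV : ∀ l i j, Measurable fun a => V l a i j) {σ : ℝ → ℝ} (hσc : Continuous σ)
    (hσ' : Measurable (deriv σ)) :
    ∀ (l : ℕ) (x : ℝ) (j), Measurable fun a => mlpDeriv d (fun l' => V l' a) σ l x j := by
  intro l
  induction l with
  | zero =>
    intro x j
    simp only [mlpDeriv_zero]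
    exact Finset.measurable_sum _ (fun k _ => hV 0 j k)
  | succ l ih =>
    intro x j
    simp only [mlpDeriv_succ]
    exact Finset.measurable_sum _ (fun k _ => (hV (l+1) j k).mul
      ((hσ'.comp (measurable_mlpPre_param d V hV hσc l x k)).mul (ih x k)))

/-- Rebuild a family of weight matrices from a tuple of entries indexed by a finset. -/
noncomputable def wof (L : ℕ) (d : ℕ → ℕ)
    (S : Finset ((l : Fin (L + 1)) × (Fin (d (l.1 + 1)) × Fin (d l.1))))
    (t : {p // p ∈ S} → ℝ) (l' : ℕ) : Matrix (Fin (d (l' + 1))) (Fin (d l')) ℝ :=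
  fun a b => if h : l' < L + 1 then
    (if h2 : (⟨⟨l', h⟩, a, b⟩ : (l : Fin (L + 1)) × (Fin (d (l.1 + 1)) × Fin (d l.1))) ∈ S
      then t ⟨_, h2⟩ else 0) else 0

lemma wof_measurable (L : ℕ) (d : ℕ → ℕ)
    (S : Finset ((l : Fin (L + 1)) × (Fin (d (l.1 + 1)) × Fin (d l.1)))) (l' : ℕ) (a b) :
    Measurable fun t => wof L d S t l' a b := by
  unfold wof
  split
  · split
    · exact measurable_pi_apply _
    · exact measurable_const
  · exact measurable_const

lemma sq_le_sq_of_abs_le {a b : ℝ} (h : |a| ≤ |b|) : a ^ 2 ≤ b ^ 2 := by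
  rw [← sq_abs a, ← sq_abs b]
  exact pow_le_pow_left₀ (abs_nonneg a) h 2

section Key
variable {Ω : Type*} [MeasurableSpace Ω] {μ : Measure Ω} [IsProbabilityMeasure μ]

lemma integrable_mul_of_memL2 {f g : Ω → ℝ} (hf : MemLp f 2 μ) (hg : MemLp g 2 μ) :
    Integrable (fun ω => f ω * g ω) μ := by
  refine (hf.integrable_sq.add hg.integrable_sq).mono'
    (hf.aestronglyMeasurable.mul hg.aestronglyMeasurable) (Filter.Eventually.of_forall fun ω => ?_)
  have h1 : ‖f ω * g ω‖ = |f ω| * |g ω| := by rw [norm_mul]; rfl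
  have h2 : |f ω| * |g ω| ≤ f ω ^ 2 + g ω ^ 2 := by nlinarith [abs_nonneg (f ω), abs_nonneg (g ω), sq_abs (f ω), sq_abs (g ω), sq_nonneg (|f ω| - |g ω|)]
  simpa [h1] using h2

/-- Key expansion: if the cross terms vanish and the diagonal factorizes, the second
moment of `∑ j, X j * Y j` equals `s * ∑ j, ∫ Y j ^ 2`. -/
lemma key_expansion {n : ℕ} (X Y : Fin n → Ω → ℝ) (s : ℝ)
    (hXY2 : ∀ j, MemLp (fun ω => X j ω * Y j ω) 2 μ)
    (hcross : ∀ j k, j ≠ k → ∫ ω, (X j ω * Y j ω) * (X k ω * Y k ω) ∂μ = 0)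
    (hdiag : ∀ j, ∫ ω, (X j ω * Y j ω) ^ 2 ∂μ = s * ∫ ω, (Y j ω) ^ 2 ∂μ) :
    MemLp (fun ω => ∑ j, X j ω * Y j ω) 2 μ ∧
    ∫ ω, (∑ j, X j ω * Y j ω) ^ 2 ∂μ = s * ∑ j, ∫ ω, (Y j ω) ^ 2 ∂μ := by
  constructor
  · exact memLp_finset_sum _ (fun j _ => hXY2 j)
  · have hexp : ∀ ω, (∑ j, X j ω * Y j ω) ^ 2
        = ∑ j, ∑ k, (X j ω * Y j ω) * (X k ω * Y k ω) := by
      intro ω; rw [sq, Finset.sum_mul_sum]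
    simp_rw [hexp]
    rw [integral_finset_sum _ (fun j _ => integrable_finset_sum _ (fun k _ =>
      integrable_mul_of_memL2 (hXY2 j) (hXY2 k)))]
    have hinner : ∀ j : Fin n, ∫ ω, ∑ k, (X j ω * Y j ω) * (X k ω * Y k ω) ∂μ
        = s * ∫ ω, (Y j ω) ^ 2 ∂μ := by
      intro j
      rw [integral_finset_sum _ (fun k _ => integrable_mul_of_memL2 (hXY2 j) (hXY2 k))]
      rw [Finset.sum_eq_single j]
      · rw [← hdiag j]; congr 1; funext ω; ring
      · intro k _ hk; exact hcross j k (Ne.symm hk)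
      · intro h; exact absurd (Finset.mem_univ j) h
    simp_rw [hinner]
    rw [← Finset.mul_sum]

end Key


/-- For a randomly initialized MLP with scalar input and output,
hidden widths all equal to `m`, zero biases, jointly independent mean-zero
square-integrable weight entries with Glorot variances (`2/(m+1)` for the first and last
layers, `1/m` for the middle layers), and a differentiable activation `σ` with measurable
derivative bounded by `1`, the random variable `ω ↦ ∂u_θ/∂x (x)` is square-integrable and
its variance is at most `4 / m`. -/
theorem variance_mlp_deriv_le
    {Ω : Type*} [MeasurableSpace Ω] (μ : Measure Ω) [IsProbabilityMeasure μ]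
    (L m : ℕ) (hL : 1 ≤ L) (hm : 1 ≤ m)
    (d : ℕ → ℕ) (h0 : d 0 = 1) (hdL : d (L + 1) = 1)
    (hdm : ∀ l, 1 ≤ l → l ≤ L → d l = m)
    (W : (l : ℕ) → Ω → Matrix (Fin (d (l + 1))) (Fin (d l)) ℝ)
    (hWmeas : ∀ l i j, Measurable fun ω => W l ω i j)
    (hWL2 : ∀ l i j, MemLp (fun ω => W l ω i j) 2 μ)
    (hWindep : iIndepFun
      (fun p : (l : Fin (L + 1)) × (Fin (d (l.1 + 1)) × Fin (d l.1)) =>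
        fun ω => W p.1 ω p.2.1 p.2.2) μ)
    (hWmean : ∀ l, l ≤ L → ∀ i j, ∫ ω, W l ω i j ∂μ = 0)
    (hvarFirst : ∀ i j, variance (fun ω => W 0 ω i j) μ = 2 / (m + 1))
    (hvarLast : ∀ i j, variance (fun ω => W L ω i j) μ = 2 / (m + 1))
    (hvarMid : ∀ l, 1 ≤ l → l < L → ∀ i j, variance (fun ω => W l ω i j) μ = 1 / m)
    (σ : ℝ → ℝ) (hσ : Differentiable ℝ σ)
    (hσ' : Measurable (deriv σ)) (hσbound : ∀ t, |deriv σ t| ≤ 1)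
    (x : ℝ) (i : Fin (d (L + 1))) :
    MemLp (fun ω =>
      deriv (fun t => mlpPre d (fun l => W l ω) (fun _ => 0) σ L t i) x) 2 μ ∧
    variance (fun ω =>
      deriv (fun t => mlpPre d (fun l => W l ω) (fun _ => 0) σ L t i) x) μ ≤ 4 / m := by
  classical
  have hmR : (1 : ℝ) ≤ (m : ℝ) := by exact_mod_cast hm
  have hmpos : (0 : ℝ) < (m : ℝ) := lt_of_lt_of_le one_pos hmR
  set ι := (l : Fin (L + 1)) × (Fin (d (l.1 + 1)) × Fin (d l.1)) with hι
  -- the derivative random field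
  set v : (n : ℕ) → Ω → Fin (d (n + 1)) → ℝ :=
    fun n ω => mlpDeriv d (fun l => W l ω) σ n x with hv
  have hVmeas : ∀ n (j : Fin (d (n + 1))), Measurable fun ω => v n ω j := fun n j =>
    measurable_mlpDeriv_param d (fun l ω => W l ω) hWmeas hσ.continuous hσ' n x j
  -- second moments of weights
  have hsecond : ∀ l, l ≤ L → ∀ i j, ∫ ω, (W l ω i j) ^ 2 ∂μ
      = variance (fun ω => W l ω i j) μ := by
    intro l hl i j
    rw [variance_eq_sub (hWL2 l i j), hWmean l hl i j]
    norm_num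
  -- the independence workhorse
  have hIndepGen : ∀ (S T : Finset ι), Disjoint S T →
      ∀ (φ : ({p // p ∈ S} → ℝ) → ℝ) (ψ : ({p // p ∈ T} → ℝ) → ℝ),
      Measurable φ → Measurable ψ →
      IndepFun (fun ω => φ (fun p => W (p.1.1 : ℕ) ω p.1.2.1 p.1.2.2))
        (fun ω => ψ (fun p => W (p.1.1 : ℕ) ω p.1.2.1 p.1.2.2)) μ := by
    intro S T hST φ ψ hφ hψ
    exact (hWindep.indepFun_finset S T hST (fun p => hWmeas p.1 p.2.1 p.2.2)).comp hφ hψ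
  -- reconstruction of lower layers from a finset of coordinates
  have hrecon : ∀ (n : ℕ), n < L + 1 → ∀ (S : Finset ι),
      (∀ p : ι, (p.1 : ℕ) < n → p ∈ S) → ∀ (ω : Ω) (l' : ℕ), l' < n →
      wof L d S (fun p : {q // q ∈ S} => W (p.1.1 : ℕ) ω p.1.2.1 p.1.2.2) l' = W l' ω := by
    intro n hn S hS ω l' hl'
    funext a b
    have h1 : l' < L + 1 := by omega
    have h2 : (⟨⟨l', h1⟩, a, b⟩ : ι) ∈ S := hS _ hl'
    unfold wof
    rw [dif_pos h1, dif_pos h2]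
  -- the layer step
  have hstep : ∀ (n : ℕ), n + 1 ≤ L → ∀ (s : ℝ), 0 ≤ s →
      (∀ (i : Fin (d (n + 2))) (j : Fin (d (n + 1))), ∫ ω, (W (n + 1) ω i j) ^ 2 ∂μ = s) →
      (∀ j : Fin (d (n + 1)), MemLp (fun ω => v n ω j) 2 μ) →
      ∀ i : Fin (d (n + 2)),
        MemLp (fun ω => v (n + 1) ω i) 2 μ ∧
        (∫ ω, (v (n + 1) ω i) ^ 2 ∂μ) ≤ s * ∑ j, ∫ ω, (v n ω j) ^ 2 ∂μ ∧
        ∫ ω, v (n + 1) ω i ∂μ = 0 := by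
    intro n hn s hs hvar hprev i
    have hn1 : n + 1 < L + 1 := by omega
    set pIdx : Fin (d (n + 1)) → ι := fun j => ⟨⟨n + 1, hn1⟩, i, j⟩ with hpIdx
    set X : Fin (d (n + 1)) → Ω → ℝ := fun j ω => W (n + 1) ω i j with hX
    set Y : Fin (d (n + 1)) → Ω → ℝ := fun j ω =>
      deriv σ (mlpPre d (fun l => W l ω) (fun _ _ => 0) σ n x j) * v n ω j with hY
    set T0 : Finset ι := Finset.univ.filter (fun p => (p.1 : ℕ) < n + 1) with hT0
    have hT0mem : ∀ p : ι, (p.1 : ℕ) < n + 1 → p ∈ T0 := fun p hp =>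
      Finset.mem_filter.mpr ⟨Finset.mem_univ _, hp⟩
    have hpT0 : ∀ j, pIdx j ∉ T0 := by
      intro j hmem
      have := (Finset.mem_filter.mp hmem).2
      simp [pIdx] at this
    -- Y j as a measurable function of the coordinates in any S ⊇ T0
    have hYexpr : ∀ (S : Finset ι), T0 ⊆ S → ∀ j : Fin (d (n + 1)),
        ∃ G : ({q // q ∈ S} → ℝ) → ℝ, Measurable G ∧
        Y j = fun ω => G (fun p => W (p.1.1 : ℕ) ω p.1.2.1 p.1.2.2) := by
      intro S hS j
      refine ⟨fun t => deriv σ (mlpPre d (wof L d S t) (fun _ _ => 0) σ n x j) *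
        mlpDeriv d (wof L d S t) σ n x j, ?_, ?_⟩
      · exact (hσ'.comp (measurable_mlpPre_param d (fun l' t => wof L d S t l')
          (fun l' a b => wof_measurable L d S l' a b) hσ.continuous n x j)).mul
          (measurable_mlpDeriv_param d (fun l' t => wof L d S t l')
          (fun l' a b => wof_measurable L d S l' a b) hσ.continuous hσ' n x j)
      · funext ω
        have hWeq : ∀ l', l' ≤ n →
            wof L d S (fun p : {q // q ∈ S} => W (p.1.1 : ℕ) ω p.1.2.1 p.1.2.2) l' = W l' ω :=
          fun l' hl' => hrecon (n + 1) hn1 S (fun p hp => hS (hT0mem p hp)) ω l' (by omega)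
        simp only [hY, hv]
        rw [mlpPre_congr d (fun l => W l ω) (fun l' =>
            wof L d S (fun p : {q // q ∈ S} => W (p.1.1 : ℕ) ω p.1.2.1 p.1.2.2) l')
            (fun _ _ => 0) σ n (fun l' hl' => (hWeq l' hl').symm) x,
          mlpDeriv_congr d (fun l => W l ω) (fun l' =>
            wof L d S (fun p : {q // q ∈ S} => W (p.1.1 : ℕ) ω p.1.2.1 p.1.2.2) l')
            σ n (fun l' hl' => (hWeq l' hl').symm) x]
    -- independence of X j and Y j
    have hXYindep : ∀ j, IndepFun (X j) (Y j) μ := by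
      intro j
      obtain ⟨G, hG, hYeq⟩ := hYexpr T0 (Finset.Subset.refl _) j
      have hdisj : Disjoint ({pIdx j} : Finset ι) T0 :=
        Finset.disjoint_singleton_left.mpr (hpT0 j)
      have h := hIndepGen {pIdx j} T0 hdisj
        (fun t => t ⟨pIdx j, Finset.mem_singleton_self _⟩) G (measurable_pi_apply _) hG
      rw [hYeq]
      exact h
    -- independence for the cross terms
    have hcrossIndep : ∀ j k, j ≠ k →
        IndepFun (X j) (fun ω => X k ω * (Y j ω * Y k ω)) μ := by
      intro j k hjk
      have hpjk : pIdx j ≠ pIdx k := by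
        intro h
        have hv2 := congrArg (fun p : ι => (p.2.2.1 : ℕ)) h
        exact hjk (Fin.ext hv2)
      set T1 : Finset ι := insert (pIdx k) T0 with hT1
      have hsub : T0 ⊆ T1 := Finset.subset_insert _ _
      obtain ⟨Gj, hGj, hYeqj⟩ := hYexpr T1 hsub j
      obtain ⟨Gk, hGk, hYeqk⟩ := hYexpr T1 hsub k
      have hdisj : Disjoint ({pIdx j} : Finset ι) T1 := by
        rw [Finset.disjoint_singleton_left, hT1, Finset.mem_insert]
        push_neg
        exact ⟨hpjk, hpT0 j⟩
      have h := hIndepGen {pIdx j} T1 hdisj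
        (fun t => t ⟨pIdx j, Finset.mem_singleton_self _⟩)
        (fun t => t ⟨pIdx k, Finset.mem_insert_self _ _⟩ * (Gj t * Gk t))
        (measurable_pi_apply _)
        ((measurable_pi_apply _).mul (hGj.mul hGk))
      have h2 : (fun ω => (fun t : {q // q ∈ T1} → ℝ =>
          t ⟨pIdx k, Finset.mem_insert_self _ _⟩ * (Gj t * Gk t))
          (fun p : {q // q ∈ T1} => W (p.1.1 : ℕ) ω p.1.2.1 p.1.2.2))
          = fun ω => X k ω * (Y j ω * Y k ω) := by
        funext ω
        simp only
        rw [congrFun hYeqj ω, congrFun hYeqk ω]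
      rw [← h2]
      exact h
    -- basic facts
    have hXmeas : ∀ j, Measurable (X j) := fun j => hWmeas (n + 1) i j
    have hXmem : ∀ j, MemLp (X j) 2 μ := fun j => hWL2 (n + 1) i j
    have hXmean : ∀ j, ∫ ω, X j ω ∂μ = 0 := fun j => hWmean (n + 1) hn i j
    have hX2 : ∀ j, ∫ ω, (X j ω) ^ 2 ∂μ = s := fun j => hvar i j
    have hYmeas : ∀ j, Measurable (Y j) := by
      intro j
      apply (hσ'.comp (measurable_mlpPre_param d (fun l ω => W l ω) hWmeas
        hσ.continuous n x j)).mul (hVmeas n j)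
    have hYabs : ∀ j ω, |Y j ω| ≤ |v n ω j| := by
      intro j ω
      rw [hY]
      simp only
      rw [abs_mul]
      calc |deriv σ (mlpPre d (fun l => W l ω) (fun _ _ => 0) σ n x j)| * |v n ω j|
          ≤ 1 * |v n ω j| := by
            apply mul_le_mul_of_nonneg_right (hσbound _) (abs_nonneg _)
        _ = |v n ω j| := one_mul _
    have hYmem : ∀ j, MemLp (Y j) 2 μ := fun j =>
      (hprev j).of_le (hYmeas j).aestronglyMeasurable
        (Filter.Eventually.of_forall fun ω => by
          simpa [Real.norm_eq_abs] using hYabs j ω)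
    -- diagonal second moments, via independence
    have hsqindep : ∀ j, IndepFun (fun ω => (X j ω) ^ 2) (fun ω => (Y j ω) ^ 2) μ := by
      intro j
      exact (hXYindep j).comp (measurable_id.pow_const 2) (measurable_id.pow_const 2)
    have hg2 : ∀ j, MemLp (fun ω => X j ω * Y j ω) 2 μ := by
      intro j
      rw [memLp_two_iff_integrable_sq (f := fun ω => X j ω * Y j ω)
        (((hXmeas j).mul (hYmeas j)).aestronglyMeasurable)]
      have he : (fun ω => (X j ω * Y j ω) ^ 2) = fun ω => (X j ω) ^ 2 * (Y j ω) ^ 2 := by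
        funext ω; ring
      rw [he]
      exact (hsqindep j).integrable_mul (hXmem j).integrable_sq (hYmem j).integrable_sq
    have hdiag : ∀ j, ∫ ω, (X j ω * Y j ω) ^ 2 ∂μ = s * ∫ ω, (Y j ω) ^ 2 ∂μ := by
      intro j
      have he : (fun ω => (X j ω * Y j ω) ^ 2) = fun ω => (X j ω) ^ 2 * (Y j ω) ^ 2 := by
        funext ω; ring
      have hint := (hsqindep j).integral_fun_mul_eq_mul_integral
        (((hXmeas j).pow_const 2).aestronglyMeasurable)
        (((hYmeas j).pow_const 2).aestronglyMeasurable)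
      calc ∫ ω, (X j ω * Y j ω) ^ 2 ∂μ = ∫ ω, (X j ω) ^ 2 * (Y j ω) ^ 2 ∂μ := by rw [he]
        _ = (∫ ω, (X j ω) ^ 2 ∂μ) * ∫ ω, (Y j ω) ^ 2 ∂μ := hint
        _ = s * ∫ ω, (Y j ω) ^ 2 ∂μ := by rw [hX2 j]
    have hcross : ∀ j k, j ≠ k →
        ∫ ω, (X j ω * Y j ω) * (X k ω * Y k ω) ∂μ = 0 := by
      intro j k hjk
      have hmeasR : Measurable (fun ω => X k ω * (Y j ω * Y k ω)) :=
        (hXmeas k).mul ((hYmeas j).mul (hYmeas k))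
      have hint := (hcrossIndep j k hjk).integral_fun_mul_eq_mul_integral
        (hXmeas j).aestronglyMeasurable hmeasR.aestronglyMeasurable
      have he : (fun ω => (X j ω * Y j ω) * (X k ω * Y k ω))
          = fun ω => X j ω * (X k ω * (Y j ω * Y k ω)) := by
        funext ω; ring
      calc ∫ ω, (X j ω * Y j ω) * (X k ω * Y k ω) ∂μ
          = ∫ ω, X j ω * (X k ω * (Y j ω * Y k ω)) ∂μ := by rw [he]
        _ = (∫ ω, X j ω ∂μ) * ∫ ω, X k ω * (Y j ω * Y k ω) ∂μ := hint
        _ = 0 := by rw [hXmean j, zero_mul]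
    have key := key_expansion X Y s hg2 hcross hdiag
    have hvrepr : (fun ω => v (n + 1) ω i) = fun ω => ∑ j, X j ω * Y j ω := by
      funext ω
      simp only [hv, hX, hY]
      exact mlpDeriv_succ d (fun l => W l ω) σ n x i
    have hv2 : ∀ ω, v (n + 1) ω i = ∑ j, X j ω * Y j ω := fun ω => congrFun hvrepr ω
    refine ⟨?_, ?_, ?_⟩
    · rw [hvrepr]; exact key.1
    · simp only [hv2]
      rw [key.2]
      apply mul_le_mul_of_nonneg_left _ hs
      apply Finset.sum_le_sum
      intro j _
      apply integral_mono (hYmem j).integrable_sq (hprev j).integrable_sq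
      intro ω
      exact sq_le_sq_of_abs_le (hYabs j ω)
    · simp only [hv2]
      rw [integral_finset_sum _ (fun j _ => ((hg2 j).integrable one_le_two))]
      apply Finset.sum_eq_zero
      intro j _
      calc ∫ ω, X j ω * Y j ω ∂μ
          = (∫ ω, X j ω ∂μ) * ∫ ω, Y j ω ∂μ := (hXYindep j).integral_fun_mul_eq_mul_integral
            (hXmeas j).aestronglyMeasurable (hYmeas j).aestronglyMeasurable
        _ = 0 := by rw [hXmean j, zero_mul]
  -- base layer
  have hbase : ∀ i : Fin (d 1), MemLp (fun ω => v 0 ω i) 2 μ ∧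
      ∫ ω, (v 0 ω i) ^ 2 ∂μ = 2 / ((m : ℝ) + 1) := by
    intro i
    set X : Fin (d 0) → Ω → ℝ := fun j ω => W 0 ω i j with hX
    set Y : Fin (d 0) → Ω → ℝ := fun _ _ => 1 with hY
    have hcross : ∀ j k, j ≠ k → ∫ ω, (X j ω * Y j ω) * (X k ω * Y k ω) ∂μ = 0 := by
      intro j k hjk
      have hne : (⟨⟨0, Nat.succ_pos L⟩, i, j⟩ : ι) ≠ ⟨⟨0, Nat.succ_pos L⟩, i, k⟩ := by
        intro h
        exact hjk (Fin.ext (congrArg (fun p : ι => (p.2.2.1 : ℕ)) h))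
      have hind : IndepFun (X j) (X k) μ := hWindep.indepFun hne
      calc ∫ ω, (X j ω * Y j ω) * (X k ω * Y k ω) ∂μ
          = ∫ ω, X j ω * X k ω ∂μ := by simp [hY]
        _ = (∫ ω, X j ω ∂μ) * ∫ ω, X k ω ∂μ := hind.integral_fun_mul_eq_mul_integral
            (hWmeas 0 i j).aestronglyMeasurable (hWmeas 0 i k).aestronglyMeasurable
        _ = 0 := by
            have : ∫ ω, X j ω ∂μ = 0 := hWmean 0 (Nat.zero_le L) i j
            rw [this, zero_mul]
    have hdiag : ∀ j, ∫ ω, (X j ω * Y j ω) ^ 2 ∂μ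
        = (2 / ((m : ℝ) + 1)) * ∫ ω, (Y j ω) ^ 2 ∂μ := by
      intro j
      have h1 : ∫ ω, (Y j ω) ^ 2 ∂μ = 1 := by simp [hY]
      have h2 : ∫ ω, (X j ω * Y j ω) ^ 2 ∂μ = ∫ ω, (X j ω) ^ 2 ∂μ := by simp [hY]
      rw [h1, mul_one, h2, hsecond 0 (Nat.zero_le L) i j, hvarFirst i j]
    have hg2 : ∀ j, MemLp (fun ω => X j ω * Y j ω) 2 μ := by
      intro j
      simpa [hY] using hWL2 0 i j
    have key := key_expansion X Y (2 / ((m : ℝ) + 1)) hg2 hcross hdiag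
    have hvrepr : (fun ω => v 0 ω i) = fun ω => ∑ j, X j ω * Y j ω := by
      funext ω
      simp [hv, hX, hY, mlpDeriv_zero]
    have hv2 : ∀ ω, v 0 ω i = ∑ j, X j ω * Y j ω := fun ω => congrFun hvrepr ω
    constructor
    · rw [hvrepr]; exact key.1
    · simp only [hv2]
      rw [key.2]
      have hsum : ∑ j : Fin (d 0), ∫ ω, (Y j ω) ^ 2 ∂μ = 1 := by
        simp [hY, h0]
      rw [hsum, mul_one]
  -- induction over the hidden layers
  have hmain : ∀ n, n < L → (∀ j : Fin (d (n + 1)), MemLp (fun ω => v n ω j) 2 μ) ∧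
      (∑ j : Fin (d (n + 1)), ∫ ω, (v n ω j) ^ 2 ∂μ) ≤ 2 * (m : ℝ) / ((m : ℝ) + 1) := by
    intro n
    induction n with
    | zero =>
      intro _
      refine ⟨fun j => (hbase j).1, le_of_eq ?_⟩
      have hcard : (Finset.univ : Finset (Fin (d 1))).card = m := by
        simp [Finset.card_univ, hdm 1 le_rfl hL]
      calc ∑ j : Fin (d 1), ∫ ω, (v 0 ω j) ^ 2 ∂μ
          = ∑ _j : Fin (d 1), 2 / ((m : ℝ) + 1) :=
            Finset.sum_congr rfl (fun j _ => (hbase j).2)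
        _ = (m : ℝ) * (2 / ((m : ℝ) + 1)) := by rw [Finset.sum_const, hcard, nsmul_eq_mul]
        _ = 2 * (m : ℝ) / ((m : ℝ) + 1) := by ring
    | succ n ih =>
      intro hlt
      have hnL : n < L := Nat.lt_of_succ_lt hlt
      have ihp := ih hnL
      have hvar1 : ∀ (i : Fin (d (n + 2))) (j : Fin (d (n + 1))),
          ∫ ω, (W (n + 1) ω i j) ^ 2 ∂μ = 1 / (m : ℝ) := by
        intro i j
        rw [hsecond (n + 1) hlt.le i j,
          hvarMid (n + 1) (Nat.succ_le_succ (Nat.zero_le n)) hlt i j]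
      have hs' : (0 : ℝ) ≤ 1 / (m : ℝ) := by positivity
      have hv3 := hstep n hlt.le (1 / (m : ℝ)) hs' hvar1 ihp.1
      refine ⟨fun i => (hv3 i).1, ?_⟩
      have hcard : (Finset.univ : Finset (Fin (d (n + 2)))).card = m := by
        simp [Finset.card_univ, hdm (n + 2) (by omega) (by omega)]
      calc ∑ i : Fin (d (n + 2)), ∫ ω, (v (n + 1) ω i) ^ 2 ∂μ
          ≤ ∑ _i : Fin (d (n + 2)), (1 / (m : ℝ)) * (2 * (m : ℝ) / ((m : ℝ) + 1)) :=
            Finset.sum_le_sum (fun i _ =>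
              le_trans (hv3 i).2.1 (mul_le_mul_of_nonneg_left ihp.2 hs'))
        _ = (m : ℝ) * ((1 / (m : ℝ)) * (2 * (m : ℝ) / ((m : ℝ) + 1))) := by
            rw [Finset.sum_const, hcard, nsmul_eq_mul]
        _ = 2 * (m : ℝ) / ((m : ℝ) + 1) := by field_simp
  -- the last layer
  obtain ⟨K, rfl⟩ : ∃ K, L = K + 1 := ⟨L - 1, (Nat.succ_pred_eq_of_pos hL).symm⟩
  have hvarL : ∀ (i : Fin (d (K + 2))) (j : Fin (d (K + 1))),
      ∫ ω, (W (K + 1) ω i j) ^ 2 ∂μ = 2 / ((m : ℝ) + 1) := by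
    intro i j
    rw [hsecond (K + 1) le_rfl i j]
    exact hvarLast i j
  have hprev := hmain K (Nat.lt_succ_self K)
  have hs' : (0 : ℝ) ≤ 2 / ((m : ℝ) + 1) := by positivity
  have hfin := hstep K le_rfl (2 / ((m : ℝ) + 1)) hs' hvarL hprev.1 i
  have hbound : ∫ ω, (v (K + 1) ω i) ^ 2 ∂μ
      ≤ (2 / ((m : ℝ) + 1)) * (2 * (m : ℝ) / ((m : ℝ) + 1)) :=
    le_trans hfin.2.1 (mul_le_mul_of_nonneg_left hprev.2 hs')
  have hfun : (fun ω => deriv (fun t =>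
      mlpPre d (fun l => W l ω) (fun _ => 0) σ (K + 1) t i) x) = fun ω => v (K + 1) ω i := by
    funext ω
    exact (mlpPre_hasDerivAt d (fun l => W l ω) σ hσ (K + 1) x i).deriv
  rw [hfun]
  refine ⟨hfin.1, ?_⟩
  rw [variance_eq_sub hfin.1]
  have h1 : (μ[(fun ω => v (K + 1) ω i) ^ 2] : ℝ) = ∫ ω, (v (K + 1) ω i) ^ 2 ∂μ := rfl
  have h2 : (μ[fun ω => v (K + 1) ω i] : ℝ) = 0 := hfin.2.2
  rw [h1, h2]
  have hnum : (2 / ((m : ℝ) + 1)) * (2 * (m : ℝ) / ((m : ℝ) + 1)) ≤ 4 / (m : ℝ) := by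
    rw [div_mul_div_comm, div_le_div_iff₀ (by positivity) hmpos]
    nlinarith [hmR]
  calc ∫ ω, (v (K + 1) ω i) ^ 2 ∂μ - 0 ^ 2
      = ∫ ω, (v (K + 1) ω i) ^ 2 ∂μ := by ring
    _ ≤ (2 / ((m : ℝ) + 1)) * (2 * (m : ℝ) / ((m : ℝ) + 1)) := hbound
    _ ≤ 4 / (m : ℝ) := hnum
end

section
/- Let u_θ be an MLP with scalar input and output in which all hidden layers have the same width d (d₁ = ⋯ = d_L = d), with all biases equal to zero, and suppose the entries of the weight matrices W⁽¹⁾,…,W⁽ᴸ⁺¹⁾ are jointly independent square-integrable real random variables on a probability space, each with mean zero, where every entry of W⁽¹⁾ has variance 2/(d+1) and every entry of W⁽ˡ⁾ for 2 ≤ l ≤ L has variance 1/d. Assume σ : ℝ → ℝ is differentiable with measurable derivative satisfying |σ'(t)| ≤ 1 for all t ∈ ℝ. Fix x ∈ ℝ and for l = 1,…,L define the random vector X⁽ˡ⁾(x) ∈ ℝ^d by X⁽¹⁾(x) = W⁽¹⁾ and X⁽ˡ⁾(x) = W⁽ˡ⁾ · diag(σ'(u⁽ˡ⁻¹⁾(x)))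 · X⁽ˡ⁻¹⁾(x) for 2 ≤ l ≤ L. Then for every l ∈ {1,…,L} and every component k ∈ {1,…,d}, the random variable X⁽ˡ⁾_k(x) is square-integrable with 𝔼[X⁽ˡ⁾_k(x)] = 0 and Var(X⁽ˡ⁾_k(x)) ≤ 2/(d+1). -/
open Matrix MeasureTheory ProbabilityTheory

/-- The hidden-stack gradient `X⁽ˡ⁺¹⁾(x)` of the MLP, defined recursively by
`X⁽¹⁾(x) = W⁽¹⁾` (a `d₁ × 1` matrix, identified with a vector) and
`X⁽ˡ⁺¹⁾(x) = W⁽ˡ⁺¹⁾ ⬝ diag(σ'(u⁽ˡ⁾(x))) ⬝ X⁽ˡ⁾(x)`.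
Here `jacProd d W b σ x l` is `X⁽ˡ⁺¹⁾(x)`. -/
noncomputable def jacProd (d : ℕ → ℕ)
    (W : (l : ℕ) → Matrix (Fin (d (l + 1))) (Fin (d l)) ℝ)
    (b : (l : ℕ) → Fin (d (l + 1)) → ℝ) (σ : ℝ → ℝ) (x : ℝ) :
    (l : ℕ) → Matrix (Fin (d (l + 1))) (Fin (d 0)) ℝ
  | 0 => W 0
  | l + 1 =>
      W (l + 1) * Matrix.diagonal (fun i => deriv σ (mlpPre d W b σ l x i)) *
        jacProd d W b σ x l

section aux
variable (d : ℕ → ℕ) (b : (l : ℕ) → Fin (d (l + 1)) → ℝ) (σ : ℝ → ℝ) (x : ℝ)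

lemma mlpPre_zero_apply (W) (i : Fin (d 1)) :
    mlpPre d W b σ 0 x i = (∑ k, W 0 i k * x) + b 0 i := by
  simp [mlpPre, Matrix.mulVec, dotProduct]

lemma mlpPre_succ_apply (W) (l : ℕ) (i : Fin (d (l + 2))) :
    mlpPre d W b σ (l + 1) x i
      = (∑ k, W (l + 1) i k * σ (mlpPre d W b σ l x k)) + b (l + 1) i := by
  simp [mlpPre, Matrix.mulVec, dotProduct]

lemma jacProd_zero (W) : jacProd d W b σ x 0 = W 0 := rfl

lemma jacProd_succ_apply (W) (l : ℕ) (i : Fin (d (l + 2))) (j : Fin (d 0)) :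
    jacProd d W b σ x (l + 1) i j
      = ∑ k, W (l + 1) i k *
          (deriv σ (mlpPre d W b σ l x k) * jacProd d W b σ x l k j) := by
  simp [jacProd, Matrix.mul_apply, Matrix.diagonal_apply, Finset.mul_sum, Finset.sum_mul,
    mul_assoc]

lemma mlpPre_congr_s8 {W₁ W₂} (l : ℕ) (h : ∀ k, k ≤ l → W₁ k = W₂ k) :
    mlpPre d W₁ b σ l x = mlpPre d W₂ b σ l x := by
  induction l with
  | zero => simp [mlpPre, h 0 le_rfl]
  | succ n ih =>
      have h1 := h (n + 1) le_rfl
      have h2 := ih fun k hk => h k (hk.trans (Nat.le_succ n))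
      simp [mlpPre, h1, h2]

lemma jacProd_congr {W₁ W₂} (l : ℕ) (h : ∀ k, k ≤ l → W₁ k = W₂ k) :
    jacProd d W₁ b σ x l = jacProd d W₂ b σ x l := by
  induction l with
  | zero => simp [jacProd, h 0 le_rfl]
  | succ n ih =>
      have h1 := h (n + 1) le_rfl
      have h2 := ih fun k hk => h k (hk.trans (Nat.le_succ n))
      have h3 := mlpPre_congr_s8 d b σ x n fun k hk => h k (hk.trans (Nat.le_succ n))
      simp [jacProd, h1, h2, h3]

variable {α : Type*} [MeasurableSpace α]

lemma mlpPre_measurable (V : (l : ℕ) → α → Matrix (Fin (d (l + 1))) (Fin (d l)) ℝ)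
    (hV : ∀ l i j, Measurable fun a => V l a i j) (hσ : Continuous σ) :
    ∀ (l : ℕ) (i : Fin (d (l + 1))),
      Measurable fun a => mlpPre d (fun k => V k a) b σ l x i := by
  intro l
  induction l with
  | zero =>
      intro i
      simp_rw [mlpPre_zero_apply]
      exact (Finset.measurable_sum _ fun k _ => (hV 0 i k).mul measurable_const).add
        measurable_const
  | succ n ih =>
      intro i
      simp_rw [mlpPre_succ_apply]
      exact (Finset.measurable_sum _ fun k _ =>
        (hV (n + 1) i k).mul (hσ.measurable.comp (ih k))).add measurable_const

lemma jacProd_measurable (V : (l : ℕ) → α → Matrix (Fin (d (l + 1))) (Fin (d l)) ℝ)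
    (hV : ∀ l i j, Measurable fun a => V l a i j) (hσ : Continuous σ)
    (hσ' : Measurable (deriv σ)) :
    ∀ (l : ℕ) (i : Fin (d (l + 1))) (j : Fin (d 0)),
      Measurable fun a => jacProd d (fun k => V k a) b σ x l i j := by
  intro l
  induction l with
  | zero => intro i j; simpa [jacProd] using hV 0 i j
  | succ n ih =>
      intro i j
      simp_rw [jacProd_succ_apply]
      exact Finset.measurable_sum _ fun k _ =>
        (hV (n + 1) i k).mul
          ((hσ'.comp (mlpPre_measurable d b σ x V hV hσ n k)).mul (ih k j))

end aux

lemma indep_eval_of_ignores {Ω ι : Type*} [MeasurableSpace Ω] [Fintype ι]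
    (μ : Measure Ω) (f : ι → Ω → ℝ) (hmeas : ∀ i, Measurable (f i))
    (hindep : iIndepFun f μ) (i0 : ι)
    (F : (ι → ℝ) → ℝ) (hF : Measurable F)
    (hign : ∀ v w : ι → ℝ, (∀ p, p ≠ i0 → v p = w p) → F v = F w) :
    IndepFun (f i0) (fun ω => F (fun p => f p ω)) μ := by
  classical
  set T : Finset ι := {i0}ᶜ with hT
  have hd : Disjoint ({i0} : Finset ι) T := by simp [hT]
  have h := hindep.indepFun_finset {i0} T hd hmeas
  have hφ : Measurable fun g : ({i0} : Finset ι) → ℝ =>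
      g ⟨i0, Finset.mem_singleton_self i0⟩ := measurable_pi_apply _
  have hψ : Measurable fun g : T → ℝ =>
      F (fun p => if hp : p ∈ T then g ⟨p, hp⟩ else 0) := by
    refine hF.comp (measurable_pi_lambda _ fun p => ?_)
    by_cases hp : p ∈ T
    · simpa [hp] using measurable_pi_apply (⟨p, hp⟩ : T)
    · simp [hp]
  have h2 := h.comp hφ hψ
  have he1 : (fun g : ({i0} : Finset ι) → ℝ => g ⟨i0, Finset.mem_singleton_self i0⟩) ∘
      (fun ω (p : ({i0} : Finset ι)) => f p ω) = f i0 := rfl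
  have he2 : (fun g : T → ℝ => F (fun p => if hp : p ∈ T then g ⟨p, hp⟩ else 0)) ∘
      (fun ω (p : T) => f p ω) = fun ω => F (fun p => f p ω) := by
    funext ω
    refine (hign _ _ fun p hp => ?_).symm
    have : p ∈ T := by simp [hT, hp]
    simp [this]
  rwa [he1, he2] at h2

noncomputable def Wrec (L : ℕ) (d : ℕ → ℕ)
    (v : ((l : Fin (L + 1)) × (Fin (d (l.1 + 1)) × Fin (d l.1))) → ℝ) (l : ℕ) :
    Matrix (Fin (d (l + 1))) (Fin (d l)) ℝ :=
  if h : l < L + 1 then Matrix.of (fun i j => v ⟨⟨l, h⟩, (i, j)⟩) else 0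

/-- For a randomly initialized MLP with scalar input and output, hidden
widths all equal to `m`, zero biases, jointly independent mean-zero square-integrable
weight entries where the entries of `W⁽¹⁾` have variance `2/(m+1)` and those of `W⁽ˡ⁾`
for `2 ≤ l ≤ L` have variance `1/m`, and a differentiable activation `σ` with measurable
derivative bounded by `1`, every component of the hidden-stack gradient
`X⁽ˡ⁾(x)` (for `l = 1,…,L`) is square-integrable, has mean zero, and has variance at most
`2/(m+1)`. -/
theorem hidden_stack_gradient_variance_le
    {Ω : Type*} [MeasurableSpace Ω] (μ : Measure Ω) [IsProbabilityMeasure μ]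
    (L m : ℕ) (hL : 1 ≤ L) (hm : 1 ≤ m)
    (d : ℕ → ℕ) (h0 : d 0 = 1) (hdL : d (L + 1) = 1)
    (hdm : ∀ l, 1 ≤ l → l ≤ L → d l = m)
    (W : (l : ℕ) → Ω → Matrix (Fin (d (l + 1))) (Fin (d l)) ℝ)
    (hWmeas : ∀ l i j, Measurable fun ω => W l ω i j)
    (hWL2 : ∀ l i j, MemLp (fun ω => W l ω i j) 2 μ)
    (hWindep : iIndepFun
      (fun p : (l : Fin (L + 1)) × (Fin (d (l.1 + 1)) × Fin (d l.1)) =>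
        fun ω => W p.1 ω p.2.1 p.2.2) μ)
    (hWmean : ∀ l, l ≤ L → ∀ i j, ∫ ω, W l ω i j ∂μ = 0)
    (hvarFirst : ∀ i j, variance (fun ω => W 0 ω i j) μ = 2 / (m + 1))
    (hvarMid : ∀ l, 1 ≤ l → l < L → ∀ i j, variance (fun ω => W l ω i j) μ = 1 / m)
    (σ : ℝ → ℝ) (hσ : Differentiable ℝ σ)
    (hσ' : Measurable (deriv σ)) (hσbound : ∀ t, |deriv σ t| ≤ 1)
    (x : ℝ) :
    ∀ l, l < L → ∀ (i : Fin (d (l + 1))) (j : Fin (d 0)),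
      MemLp (fun ω => jacProd d (fun k => W k ω) (fun _ => 0) σ x l i j) 2 μ ∧
      ∫ ω, jacProd d (fun k => W k ω) (fun _ => 0) σ x l i j ∂μ = 0 ∧
      variance (fun ω => jacProd d (fun k => W k ω) (fun _ => 0) σ x l i j) μ
        ≤ 2 / (m + 1) := by
  classical
  intro l
  induction l with
  | zero =>
      intro _ i j
      have he : (fun ω => jacProd d (fun k => W k ω) (fun _ => 0) σ x 0 i j)
          = fun ω => W 0 ω i j := by
        funext ω; rw [jacProd_zero]
      rw [he]
      exact ⟨hWL2 0 i j, hWmean 0 (Nat.zero_le L) i j, le_of_eq (hvarFirst i j)⟩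
  | succ l ih =>
      intro hl i j
      have hlL : l < L := Nat.lt_of_succ_lt hl
      have IH := ih hlL
      -- the index type
      set ι := ((l' : Fin (L + 1)) × (Fin (d (l'.1 + 1)) × Fin (d l'.1))) with hiota
      set f : ι → Ω → ℝ := fun p ω => W p.1 ω p.2.1 p.2.2 with hf
      have hfmeas : ∀ p, Measurable (f p) := fun p => hWmeas p.1 p.2.1 p.2.2
      have hlt2 : l + 1 < L + 1 := by omega
      -- Wrec basic facts
      have hWrec_meas : ∀ (k : ℕ) (i' : Fin (d (k + 1))) (j' : Fin (d k)),
          Measurable fun v : ι → ℝ => Wrec L d v k i' j' := by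
        intro k i' j'
        by_cases h : k < L + 1
        · simp only [Wrec, dif_pos h, Matrix.of_apply]; exact measurable_pi_apply _
        · simp only [Wrec, dif_neg h, Matrix.zero_apply]; exact measurable_const
      have hWrec_W : ∀ (ω : Ω) (k : ℕ), k < L + 1 →
          Wrec L d (fun p => f p ω) k = W k ω := by
        intro ω k hk
        ext i' j'
        simp only [Wrec, dif_pos hk, Matrix.of_apply]
        rfl
      have hWrec_low : ∀ (v w : ι → ℝ) (i0 : ι), (i0.1 : ℕ) = l + 1 →
          (∀ p, p ≠ i0 → v p = w p) → ∀ k, k ≤ l → Wrec L d v k = Wrec L d w k := by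
        intro v w i0 hi0 hvw k hk
        have hkL : k < L + 1 := by omega
        ext i' j'
        simp only [Wrec, dif_pos hkL, Matrix.of_apply]
        refine hvw _ fun heq => ?_
        have := congrArg (fun p : ι => (p.1 : ℕ)) heq
        simp only at this
        omega
      -- the component functions at level l and the Y's
      set Xl : Fin (d (l + 1)) → Ω → ℝ :=
        fun k ω => jacProd d (fun k' => W k' ω) (fun _ => 0) σ x l k j with hXl
      set Y : Fin (d (l + 1)) → Ω → ℝ :=
        fun k ω => deriv σ (mlpPre d (fun k' => W k' ω) (fun _ => 0) σ l x k) * Xl k ω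
        with hY
      set A : Fin (d (l + 1)) → Ω → ℝ :=
        fun k ω => W (l + 1) ω i k * Y k ω with hA
      -- the function-of-v versions
      set FA : Fin (d (l + 1)) → (ι → ℝ) → ℝ :=
        fun k v => deriv σ (mlpPre d (Wrec L d v) (fun _ => 0) σ l x k) *
          jacProd d (Wrec L d v) (fun _ => 0) σ x l k j with hFA
      have hFAmeas : ∀ k, Measurable (FA k) := by
        intro k
        exact ((hσ'.comp (mlpPre_measurable d (fun _ => 0) σ x
            (fun k' v => Wrec L d v k') hWrec_meas hσ.continuous l k)).mul
          (jacProd_measurable d (fun _ => 0) σ x (fun k' v => Wrec L d v k')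
            hWrec_meas hσ.continuous hσ' l k j))
      have hFAign : ∀ (k : Fin (d (l + 1))) (v w : ι → ℝ) (i0 : ι), (i0.1 : ℕ) = l + 1 →
          (∀ p, p ≠ i0 → v p = w p) → FA k v = FA k w := by
        intro k v w i0 hi0 hvw
        have hc := hWrec_low v w i0 hi0 hvw
        have h1 := mlpPre_congr_s8 d (fun _ => 0) σ x l hc
        have h2 := jacProd_congr d (fun _ => 0) σ x l hc
        simp only [hFA, h1, h2]
      have hFA_f : ∀ (k : Fin (d (l + 1))) (ω : Ω), FA k (fun p => f p ω) = Y k ω := by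
        intro k ω
        have hc : ∀ k', k' ≤ l → Wrec L d (fun p => f p ω) k' = W k' ω :=
          fun k' hk' => hWrec_W ω k' (by omega)
        have h1 := mlpPre_congr_s8 d (fun _ => 0) σ x l hc
        have h2 := jacProd_congr d (fun _ => 0) σ x l hc
        simp only [hFA, hY, hXl]
        rw [h1, h2]
      -- independence: W (l+1) i k  vs  Y k1
      have hIndWY : ∀ (k k1 : Fin (d (l + 1))),
          IndepFun (fun ω => W (l + 1) ω i k) (Y k1) μ := by
        intro k k1
        have h := indep_eval_of_ignores μ f hfmeas hWindep
          (⟨⟨l + 1, hlt2⟩, (i, k)⟩ : ι) (FA k1) (hFAmeas k1)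
          (fun v w hvw => hFAign k1 v w _ rfl hvw)
        have he : (fun ω => FA k1 (fun p => f p ω)) = Y k1 := funext fun ω => hFA_f k1 ω
        rw [he] at h
        exact h
      -- independence: W (l+1) i k  vs  W (l+1) i k' * (Y k * Y k')
      have hIndWG : ∀ (k k' : Fin (d (l + 1))), k ≠ k' →
          IndepFun (fun ω => W (l + 1) ω i k)
            (fun ω => W (l + 1) ω i k' * (Y k ω * Y k' ω)) μ := by
        intro k k' hkk'
        set FB : (ι → ℝ) → ℝ :=
          fun v => v ⟨⟨l + 1, hlt2⟩, (i, k')⟩ * (FA k v * FA k' v) with hFB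
        have hFBmeas : Measurable FB :=
          (measurable_pi_apply _).mul ((hFAmeas k).mul (hFAmeas k'))
        have h := indep_eval_of_ignores μ f hfmeas hWindep
          (⟨⟨l + 1, hlt2⟩, (i, k)⟩ : ι) FB hFBmeas ?_
        · have he : (fun ω => FB (fun p => f p ω))
              = fun ω => W (l + 1) ω i k' * (Y k ω * Y k' ω) := by
            funext ω
            simp only [hFB, hFA_f]
            rfl
          rw [he] at h
          exact h
        · intro v w hvw
          have hne : (⟨⟨l + 1, hlt2⟩, (i, k')⟩ : ι) ≠ ⟨⟨l + 1, hlt2⟩, (i, k)⟩ := by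
            intro heq
            have : k' = k := by
              have h2 := (Sigma.mk.inj_iff.mp heq).2
              have h3 : ((i, k') : Fin (d (l + 1 + 1)) × Fin (d (l + 1)))
                  = (i, k) := eq_of_heq h2
              exact congrArg Prod.snd h3
            exact hkk' this.symm
          simp only [hFB, hvw _ hne, hFAign k v w _ rfl hvw, hFAign k' v w _ rfl hvw]
      -- basic measurability / integrability facts
      have hXlmeas : ∀ k, Measurable (Xl k) := fun k =>
        jacProd_measurable d (fun _ => 0) σ x W hWmeas hσ.continuous hσ' l k j
      have hYmeas : ∀ k, Measurable (Y k) := fun k =>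
        (hσ'.comp (mlpPre_measurable d (fun _ => 0) σ x W hWmeas hσ.continuous l k)).mul
          (hXlmeas k)
      have hAmeas : ∀ k, Measurable (A k) := fun k => (hWmeas (l + 1) i k).mul (hYmeas k)
      have hXl2 : ∀ k, MemLp (Xl k) 2 μ := fun k => (IH k j).1
      have hYleXl : ∀ k ω, ‖Y k ω‖ ≤ ‖Xl k ω‖ := by
        intro k ω
        simp only [hY, Real.norm_eq_abs, abs_mul]
        calc |deriv σ (mlpPre d (fun k' => W k' ω) (fun _ => 0) σ l x k)| * |Xl k ω|
            ≤ 1 * |Xl k ω| := by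
              apply mul_le_mul_of_nonneg_right (hσbound _) (abs_nonneg _)
          _ = |Xl k ω| := one_mul _
      have hY2 : ∀ k, MemLp (Y k) 2 μ := fun k =>
        (hXl2 k).of_le (hYmeas k).aestronglyMeasurable (ae_of_all _ (hYleXl k))
      have hW2 : ∀ k, MemLp (fun ω => W (l + 1) ω i k) 2 μ := fun k => hWL2 (l + 1) i k
      have hWint : ∀ k, Integrable (fun ω => W (l + 1) ω i k) μ := fun k =>
        (hW2 k).integrable one_le_two
      have hEW : ∀ k, ∫ ω, W (l + 1) ω i k ∂μ = 0 := fun k =>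
        hWmean (l + 1) (le_of_lt hl) i k
      have hEW2 : ∀ k, ∫ ω, (W (l + 1) ω i k) ^ 2 ∂μ = 1 / m := by
        intro k
        have hv := hvarMid (l + 1) (by omega) hl i k
        have := variance_eq_sub (hW2 k)
        rw [hEW k] at this
        simp only [Pi.pow_apply] at this
        rw [hv] at this
        linarith [this]
      have hIndsq : ∀ k, IndepFun (fun ω => (W (l + 1) ω i k) ^ 2)
          (fun ω => (Y k ω) ^ 2) μ := fun k =>
        (hIndWY k k).comp (measurable_id.pow_const 2) (measurable_id.pow_const 2)
      have hA2 : ∀ k, MemLp (A k) 2 μ := by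
        intro k
        rw [memLp_two_iff_integrable_sq (hAmeas k).aestronglyMeasurable]
        have hint := (hIndsq k).integrable_mul (hW2 k).integrable_sq (hY2 k).integrable_sq
        have he : (fun ω => (A k ω) ^ 2)
            = (fun ω => (W (l + 1) ω i k) ^ 2) * fun ω => (Y k ω) ^ 2 := by
          funext ω; simp [hA, mul_pow]
        rw [he]
        exact hint
      have hAint : ∀ k, Integrable (A k) μ := fun k => (hA2 k).integrable one_le_two
      have hEA : ∀ k, ∫ ω, A k ω ∂μ = 0 := by
        intro k
        have h := (hIndWY k k).integral_mul_eq_mul_integral (hWint k).aestronglyMeasurable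
          ((hY2 k).integrable one_le_two).aestronglyMeasurable
        have he : ∫ ω, A k ω ∂μ = ∫ ω, ((fun ω => W (l + 1) ω i k) * Y k) ω ∂μ := rfl
        rw [he, h, hEW k, zero_mul]
      have hEY2 : ∀ k, ∫ ω, (Y k ω) ^ 2 ∂μ ≤ 2 / (m + 1) := by
        intro k
        have h1 : ∫ ω, (Y k ω) ^ 2 ∂μ ≤ ∫ ω, (Xl k ω) ^ 2 ∂μ := by
          refine integral_mono (hY2 k).integrable_sq (hXl2 k).integrable_sq fun ω => ?_
          have := hYleXl k ω
          simp only [Real.norm_eq_abs] at this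
          calc (Y k ω) ^ 2 = |Y k ω| ^ 2 := (sq_abs _).symm
            _ ≤ |Xl k ω| ^ 2 := pow_le_pow_left₀ (abs_nonneg _) this 2
            _ = (Xl k ω) ^ 2 := sq_abs _
        have h2 : ∫ ω, (Xl k ω) ^ 2 ∂μ = variance (Xl k) μ := by
          have := variance_eq_sub (hXl2 k)
          rw [(IH k j).2.1] at this
          simp only [Pi.pow_apply] at this
          linarith [this]
        have h3 := (IH k j).2.2
        linarith
      have hEA2 : ∀ k, ∫ ω, (A k ω) ^ 2 ∂μ ≤ 1 / m * (2 / (m + 1)) := by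
        intro k
        have h := (hIndsq k).integral_mul_eq_mul_integral (hW2 k).integrable_sq.aestronglyMeasurable
          (hY2 k).integrable_sq.aestronglyMeasurable
        have he : ∫ ω, (A k ω) ^ 2 ∂μ
            = ∫ ω, ((fun ω => (W (l + 1) ω i k) ^ 2) * fun ω => (Y k ω) ^ 2) ω ∂μ := by
          simp [hA, mul_pow]
        rw [he, h, hEW2 k]
        have hm0 : (0:ℝ) ≤ 1 / m := by positivity
        exact mul_le_mul_of_nonneg_left (hEY2 k) hm0
      have hAAint : ∀ k k', Integrable (fun ω => A k ω * A k' ω) μ := by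
        intro k k'
        have := ((hA2 k').smul (hA2 k) (r := 1))
        rw [memLp_one_iff_integrable] at this
        exact this
      have hcross : ∀ k k', k ≠ k' → ∫ ω, A k ω * A k' ω ∂μ = 0 := by
        intro k k' hkk'
        have hYYint : Integrable (fun ω => Y k ω * Y k' ω) μ := by
          have := ((hY2 k').smul (hY2 k) (r := 1))
          rw [memLp_one_iff_integrable] at this
          exact this
        -- independence of W(l+1) i k' from Y k * Y k'
        have hIndW'YY : IndepFun (fun ω => W (l + 1) ω i k')
            (fun ω => Y k ω * Y k' ω) μ := by
          have h := indep_eval_of_ignores μ f hfmeas hWindep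
            (⟨⟨l + 1, hlt2⟩, (i, k')⟩ : ι) (fun v => FA k v * FA k' v)
            ((hFAmeas k).mul (hFAmeas k'))
            (fun v w hvw => by
              simp only [hFAign k v w _ rfl hvw, hFAign k' v w _ rfl hvw])
          have he : (fun ω => FA k (fun p => f p ω) * FA k' (fun p => f p ω))
              = fun ω => Y k ω * Y k' ω := by
            funext ω; rw [hFA_f, hFA_f]
          rw [he] at h
          exact h
        have hGint : Integrable (fun ω => W (l + 1) ω i k' * (Y k ω * Y k' ω)) μ := by
          have := hIndW'YY.integrable_mul (hWint k') hYYint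
          exact this
        have h := (hIndWG k k' hkk').integral_mul_eq_mul_integral (hWint k).aestronglyMeasurable
          hGint.aestronglyMeasurable
        have he : ∫ ω, A k ω * A k' ω ∂μ
            = ∫ ω, ((fun ω => W (l + 1) ω i k) *
                fun ω => W (l + 1) ω i k' * (Y k ω * Y k' ω)) ω ∂μ := by
          congr 1; funext ω; simp [hA]; ring
        rw [he, h, hEW k, zero_mul]
      -- the target function equals the sum of the A k
      have hZeq : (fun ω => jacProd d (fun k => W k ω) (fun _ => 0) σ x (l + 1) i j)
          = fun ω => ∑ k, A k ω := by
        funext ω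
        exact jacProd_succ_apply d (fun _ => 0) σ x (fun k => W k ω) l i j
      rw [hZeq]
      have hZ2 : MemLp (fun ω => ∑ k, A k ω) 2 μ :=
        memLp_finset_sum Finset.univ fun k _ => hA2 k
      have hEZ : ∫ ω, ∑ k, A k ω ∂μ = 0 := by
        rw [integral_finset_sum _ fun k _ => hAint k]
        simp [hEA]
      refine ⟨hZ2, hEZ, ?_⟩
      -- variance computation
      have hvar := variance_eq_sub hZ2
      rw [hEZ] at hvar
      have hsq : ((fun ω => ∑ k, A k ω) ^ 2 : Ω → ℝ)
          = fun ω => ∑ k, ∑ k', A k ω * A k' ω := by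
        funext ω
        simp only [Pi.pow_apply, sq]
        rw [Finset.sum_mul_sum]
      have hint2 : ∀ k, Integrable (fun ω => ∑ k', A k ω * A k' ω) μ := fun k =>
        integrable_finset_sum _ fun k' _ => hAAint k k'
      have hEZ2 : ∫ ω, ((fun ω => ∑ k, A k ω) ^ 2 : Ω → ℝ) ω ∂μ
          = ∑ k, ∑ k', ∫ ω, A k ω * A k' ω ∂μ := by
        rw [hsq]
        rw [integral_finset_sum _ fun k _ => hint2 k]
        exact Finset.sum_congr rfl fun k _ =>
          integral_finset_sum _ fun k' _ => hAAint k k'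
      have hdiag : ∀ k, (∑ k', ∫ ω, A k ω * A k' ω ∂μ) = ∫ ω, (A k ω) ^ 2 ∂μ := by
        intro k
        rw [Finset.sum_eq_single_of_mem k (Finset.mem_univ k)
          (fun k' _ hk' => hcross k k' (fun h => hk' h.symm))]
        congr 1; funext ω; rw [sq]
      have hbound : ∑ k, ∫ ω, (A k ω) ^ 2 ∂μ ≤ 2 / (m + 1) := by
        calc ∑ k, ∫ ω, (A k ω) ^ 2 ∂μ
            ≤ ∑ _k : Fin (d (l + 1)), 1 / (m:ℝ) * (2 / (m + 1)) :=
              Finset.sum_le_sum fun k _ => hEA2 k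
          _ = (d (l + 1) : ℝ) * (1 / m * (2 / (m + 1))) := by
              rw [Finset.sum_const, Finset.card_univ, Fintype.card_fin, nsmul_eq_mul]
          _ = 2 / (m + 1) := by
              rw [hdm (l + 1) (by omega) (by omega)]
              have hm0 : (m:ℝ) ≠ 0 := by positivity
              field_simp
      rw [hvar, hEZ2]
      have : ∑ k, ∑ k', ∫ ω, A k ω * A k' ω ∂μ = ∑ k, ∫ ω, (A k ω) ^ 2 ∂μ :=
        Finset.sum_congr rfl fun k _ => hdiag k
      rw [this]
      simpa using hbound
end
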